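/- For every x = (x₁,x₂) with x₂ > 0, one has (1/(2π²))·∫_ℝ [1/((x₁−y₁)² + x₂²)]·(x₂, y₁−x₁)/(1+y₁²) dy₁ = (1/(2π))·(1+x₂, −x₁)/(x₁² + (1+x₂)²), where the identity holds componentwise for the two-dimensional vector-valued integral. -/

import Mathlib

open MeasureTheory Filter Topology Real

/-! ### Auxiliary limits -/

private lemma tendsto_inv_atBot_zero' : Tendsto (fun y : ℝ => y⁻¹) atBot (𝓝 0) := by
  have h := ((tendsto_inv_atTop_zero : Tendsto (fun r : ℝ => r⁻¹) atTop (𝓝 0)).comp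
    tendsto_neg_atBot_atTop).neg
  simp only [Function.comp_def, inv_neg, neg_neg, neg_zero] at h
  exact h

private lemma aux_tendsto_top (c d : ℝ) :
    Tendsto (fun y : ℝ => (c * y + d) / (1 + y ^ 2)) atTop (𝓝 0) := by
  have hnum : Tendsto (fun y : ℝ => c * y⁻¹ + d * (y⁻¹) ^ 2) atTop (𝓝 0) := by
    have := ((tendsto_inv_atTop_zero.const_mul c).add
      ((tendsto_inv_atTop_zero.pow 2).const_mul d))
    simpa using this
  have hden : Tendsto (fun y : ℝ => (y⁻¹) ^ 2 + 1) atTop (𝓝 1) := by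
    have := (tendsto_inv_atTop_zero.pow 2).add (tendsto_const_nhds (x := (1:ℝ)))
    simpa using this
  have h := hnum.div hden one_ne_zero
  rw [zero_div] at h
  apply h.congr'
  filter_upwards [eventually_gt_atTop (0:ℝ)] with y hy
  have hy' : y ≠ 0 := ne_of_gt hy
  have h2 : 1 + y ^ 2 ≠ 0 := by positivity
  rw [Pi.div_apply]
  field_simp

private lemma aux_tendsto_bot (c d : ℝ) :
    Tendsto (fun y : ℝ => (c * y + d) / (1 + y ^ 2)) atBot (𝓝 0) := by
  have hnum : Tendsto (fun y : ℝ => c * y⁻¹ + d * (y⁻¹) ^ 2) atBot (𝓝 0) := by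
    have := ((tendsto_inv_atBot_zero'.const_mul c).add
      ((tendsto_inv_atBot_zero'.pow 2).const_mul d))
    simpa using this
  have hden : Tendsto (fun y : ℝ => (y⁻¹) ^ 2 + 1) atBot (𝓝 1) := by
    have := (tendsto_inv_atBot_zero'.pow 2).add (tendsto_const_nhds (x := (1:ℝ)))
    simpa using this
  have h := hnum.div hden one_ne_zero
  rw [zero_div] at h
  apply h.congr'
  filter_upwards [eventually_lt_atBot (0:ℝ)] with y hy
  have hy' : y ≠ 0 := ne_of_lt hy
  have h2 : 1 + y ^ 2 ≠ 0 := by positivity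
  rw [Pi.div_apply]
  field_simp

private lemma logdiff_tendsto (a b : ℝ) (hb : 0 < b) (l : Filter ℝ)
    (haux : Tendsto (fun y : ℝ => ((-2*a) * y + (a^2 + b^2 - 1)) / (1 + y ^ 2)) l (𝓝 0)) :
    Tendsto (fun y : ℝ => Real.log ((y - a) ^ 2 + b ^ 2) - Real.log (1 + y ^ 2)) l (𝓝 0) := by
  have key : ∀ y : ℝ, Real.log ((y - a) ^ 2 + b ^ 2) - Real.log (1 + y ^ 2)
      = Real.log (1 + ((-2*a) * y + (a^2 + b^2 - 1)) / (1 + y ^ 2)) := by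
    intro y
    have h1 : (0:ℝ) < (y - a) ^ 2 + b ^ 2 := by positivity
    have h2 : (0:ℝ) < 1 + y ^ 2 := by positivity
    rw [← Real.log_div (ne_of_gt h1) (ne_of_gt h2)]
    congr 1
    field_simp
    ring
  simp only [key]
  have hcont : ContinuousAt Real.log 1 := Real.continuousAt_log one_ne_zero
  have h := hcont.tendsto.comp (by simpa using (tendsto_const_nhds (x := (1:ℝ))).add haux)
  simpa [Function.comp_def] using h

private lemma arctan_comp_top (a b : ℝ) (hb : 0 < b) :
    Tendsto (fun y : ℝ => Real.arctan ((y - a) / b)) atTop (𝓝 (π / 2)) := by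
  have hin : Tendsto (fun y : ℝ => (y - a) / b) atTop atTop :=
    (tendsto_atTop_add_const_right _ (-a) tendsto_id).atTop_div_const hb
  exact (Real.tendsto_arctan_atTop.mono_right nhdsWithin_le_nhds).comp hin

private lemma arctan_comp_bot (a b : ℝ) (hb : 0 < b) :
    Tendsto (fun y : ℝ => Real.arctan ((y - a) / b)) atBot (𝓝 (-(π / 2))) := by
  have hin : Tendsto (fun y : ℝ => (y - a) / b) atBot atBot :=
    (tendsto_atBot_add_const_right _ (-a) tendsto_id).atBot_div_const hb
  exact (Real.tendsto_arctan_atBot.mono_right nhdsWithin_le_nhds).comp hin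

/-! ### Generic antiderivative -/

private lemma hasDerivAt_F (a b p q t : ℝ) (hb : 0 < b) (y : ℝ) :
    HasDerivAt (fun y : ℝ => p * (Real.log ((y - a) ^ 2 + b ^ 2) - Real.log (1 + y ^ 2))
        + q * Real.arctan ((y - a) / b) + t * Real.arctan y)
      (p * (2 * (y - a) / ((y - a) ^ 2 + b ^ 2) - 2 * y / (1 + y ^ 2))
        + q * (1 / b / (1 + ((y - a) / b) ^ 2)) + t * (1 / (1 + y ^ 2))) y := by
  have h1pos : (0:ℝ) < (y - a) ^ 2 + b ^ 2 := by positivity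
  have h2pos : (0:ℝ) < 1 + y ^ 2 := by positivity
  have hQ1 : HasDerivAt (fun y : ℝ => (y - a) ^ 2 + b ^ 2) (2 * (y - a)) y := by
    have := (((hasDerivAt_id y).sub_const a).pow 2).add_const (b ^ 2)
    simpa using this
  have hlog1 : HasDerivAt (fun y : ℝ => Real.log ((y - a) ^ 2 + b ^ 2))
      (2 * (y - a) / ((y - a) ^ 2 + b ^ 2)) y := hQ1.log (ne_of_gt h1pos)
  have hQ2 : HasDerivAt (fun y : ℝ => 1 + y ^ 2) (2 * y) y := by
    have := ((hasDerivAt_pow 2 y).const_add 1)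
    simpa using this
  have hlog2 : HasDerivAt (fun y : ℝ => Real.log (1 + y ^ 2)) (2 * y / (1 + y ^ 2)) y :=
    hQ2.log (ne_of_gt h2pos)
  have hinner : HasDerivAt (fun y : ℝ => (y - a) / b) (1 / b) y := by
    have := ((hasDerivAt_id y).sub_const a).div_const b
    simpa [one_div] using this
  have harc1 : HasDerivAt (fun y : ℝ => Real.arctan ((y - a) / b))
      (1 / (1 + ((y - a) / b) ^ 2) * (1 / b)) y :=
    hinner.arctan
  have harc2 : HasDerivAt Real.arctan (1 / (1 + y ^ 2)) y := Real.hasDerivAt_arctan y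
  have h := (((hlog1.sub hlog2).const_mul p).add (harc1.const_mul q)).add (harc2.const_mul t)
  refine h.congr_deriv ?_
  ring

/-! ### Integrability -/

private lemma cont_den (a b : ℝ) (hb : 0 < b) :
    Continuous (fun y : ℝ => (1 / ((a - y) ^ 2 + b ^ 2))) := by
  apply continuous_const.div (by continuity)
  intro y
  positivity

private lemma integrable1 (a b : ℝ) (hb : 0 < b) :
    Integrable (fun y : ℝ => (1 / ((a - y) ^ 2 + b ^ 2)) * b / (1 + y ^ 2)) := by
  have hcont : Continuous (fun y : ℝ => (1 / ((a - y) ^ 2 + b ^ 2)) * b / (1 + y ^ 2)) := by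
    apply Continuous.div ((cont_den a b hb).mul continuous_const) (by continuity)
    intro y; positivity
  have hg : Integrable (fun y : ℝ => (1 / b) * (1 + y ^ 2)⁻¹) :=
    integrable_inv_one_add_sq.const_mul (1 / b)
  refine hg.mono' hcont.aestronglyMeasurable ?_
  filter_upwards with y
  have h1 : (0:ℝ) < (a - y) ^ 2 + b ^ 2 := by positivity
  have h2 : (0:ℝ) < 1 + y ^ 2 := by positivity
  have e1 : 1 / ((a - y) ^ 2 + b ^ 2) * b / (1 + y ^ 2)
      = b / (((a - y) ^ 2 + b ^ 2) * (1 + y ^ 2)) := by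
    field_simp
  have e2 : (1 / b) * (1 + y ^ 2)⁻¹ = 1 / (b * (1 + y ^ 2)) := by
    field_simp
  rw [Real.norm_eq_abs, abs_of_nonneg (by positivity), e1, e2,
    div_le_div_iff₀ (by positivity) (by positivity)]
  nlinarith [mul_nonneg (sq_nonneg (a - y)) h2.le]

private lemma integrable2 (a b : ℝ) (hb : 0 < b) :
    Integrable (fun y : ℝ => (1 / ((a - y) ^ 2 + b ^ 2)) * (y - a) / (1 + y ^ 2)) := by
  have hcont : Continuous (fun y : ℝ => (1 / ((a - y) ^ 2 + b ^ 2)) * (y - a) / (1 + y ^ 2)) := by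
    apply Continuous.div ((cont_den a b hb).mul (by continuity)) (by continuity)
    intro y; positivity
  have hg : Integrable (fun y : ℝ => (1 / (2 * b)) * (1 + y ^ 2)⁻¹) :=
    integrable_inv_one_add_sq.const_mul (1 / (2 * b))
  refine hg.mono' hcont.aestronglyMeasurable ?_
  filter_upwards with y
  have h1 : (0:ℝ) < (a - y) ^ 2 + b ^ 2 := by positivity
  have h2 : (0:ℝ) < 1 + y ^ 2 := by positivity
  have key : 2 * b * |y - a| ≤ (a - y) ^ 2 + b ^ 2 := by
    nlinarith [sq_nonneg (|y - a| - b), sq_abs (y - a), abs_nonneg (y - a)]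
  have e1 : 1 / ((a - y) ^ 2 + b ^ 2) * (y - a) / (1 + y ^ 2)
      = (y - a) / (((a - y) ^ 2 + b ^ 2) * (1 + y ^ 2)) := by
    field_simp
  have e2 : (1 / (2 * b)) * (1 + y ^ 2)⁻¹ = 1 / (2 * b * (1 + y ^ 2)) := by
    field_simp
  rw [Real.norm_eq_abs, e1, abs_div, abs_of_pos (mul_pos h1 h2), e2,
    div_le_div_iff₀ (mul_pos h1 h2) (by positivity)]
  nlinarith [mul_le_mul_of_nonneg_right key h2.le]

/-! ### The two key integral computations -/

private lemma key_integral (a b p q t : ℝ) (hb : 0 < b)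
    (f : ℝ → ℝ) (hf : Integrable f)
    (hder : ∀ y : ℝ, p * (2 * (y - a) / ((y - a) ^ 2 + b ^ 2) - 2 * y / (1 + y ^ 2))
        + q * (1 / b / (1 + ((y - a) / b) ^ 2)) + t * (1 / (1 + y ^ 2)) = f y) :
    ∫ y : ℝ, f y = (q + t) * π := by
  have hF : ∀ y : ℝ, HasDerivAt (fun y : ℝ =>
      p * (Real.log ((y - a) ^ 2 + b ^ 2) - Real.log (1 + y ^ 2))
        + q * Real.arctan ((y - a) / b) + t * Real.arctan y) (f y) y := by
    intro y
    have := hasDerivAt_F a b p q t hb y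
    rwa [hder y] at this
  have htop : Tendsto (fun y : ℝ =>
      p * (Real.log ((y - a) ^ 2 + b ^ 2) - Real.log (1 + y ^ 2))
        + q * Real.arctan ((y - a) / b) + t * Real.arctan y) atTop
      (𝓝 (p * 0 + q * (π / 2) + t * (π / 2))) := by
    exact (((logdiff_tendsto a b hb atTop (aux_tendsto_top _ _)).const_mul p).add
      ((arctan_comp_top a b hb).const_mul q)).add
      ((Real.tendsto_arctan_atTop.mono_right nhdsWithin_le_nhds).const_mul t)
  have hbot : Tendsto (fun y : ℝ =>
      p * (Real.log ((y - a) ^ 2 + b ^ 2) - Real.log (1 + y ^ 2))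
        + q * Real.arctan ((y - a) / b) + t * Real.arctan y) atBot
      (𝓝 (p * 0 + q * (-(π / 2)) + t * (-(π / 2)))) := by
    exact (((logdiff_tendsto a b hb atBot (aux_tendsto_bot _ _)).const_mul p).add
      ((arctan_comp_bot a b hb).const_mul q)).add
      ((Real.tendsto_arctan_atBot.mono_right nhdsWithin_le_nhds).const_mul t)
  have := integral_of_hasDerivAt_of_tendsto hF hf hbot htop
  rw [this]
  ring

private lemma key1 (a b : ℝ) (hb : 0 < b) :
    ∫ y₁ : ℝ, (1 / ((a - y₁) ^ 2 + b ^ 2)) * b / (1 + y₁ ^ 2)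
      = π * ((1 + b) / (a ^ 2 + (1 + b) ^ 2)) := by
  have hab : (0:ℝ) < a ^ 2 + (1 + b) ^ 2 := by positivity
  by_cases hspec : a = 0 ∧ b = 1
  · obtain ⟨ha, hb1⟩ := hspec
    subst ha hb1
    have hF : ∀ y : ℝ, HasDerivAt (fun y : ℝ => Real.arctan y / 2 + y / (2 * (1 + y ^ 2)))
        ((1 / ((0 - y) ^ 2 + 1 ^ 2)) * 1 / (1 + y ^ 2)) y := by
      intro y
      have h2 : (0:ℝ) < 1 + y ^ 2 := by positivity
      have hQ : HasDerivAt (fun y : ℝ => 2 * (1 + y ^ 2)) (2 * (2 * y)) y := by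
        have := ((hasDerivAt_pow 2 y).const_add 1).const_mul 2
        simpa using this
      have hdiv := (hasDerivAt_id y).div hQ (by positivity)
      have h := ((Real.hasDerivAt_arctan y).div_const 2).add hdiv
      refine h.congr_deriv ?_
      simp only [id]
      field_simp
      ring
    have haux : Tendsto (fun y : ℝ => y / (2 * (1 + y ^ 2))) atTop (𝓝 0) := by
      apply (aux_tendsto_top (1/2) 0).congr
      intro y
      have h2 : (0:ℝ) < 1 + y ^ 2 := by positivity
      field_simp
      ring
    have haux' : Tendsto (fun y : ℝ => y / (2 * (1 + y ^ 2))) atBot (𝓝 0) := by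
      apply (aux_tendsto_bot (1/2) 0).congr
      intro y
      have h2 : (0:ℝ) < 1 + y ^ 2 := by positivity
      field_simp
      ring
    have htop : Tendsto (fun y : ℝ => Real.arctan y / 2 + y / (2 * (1 + y ^ 2))) atTop
        (𝓝 (π / 2 / 2 + 0)) :=
      ((Real.tendsto_arctan_atTop.mono_right nhdsWithin_le_nhds).div_const 2).add haux
    have hbot : Tendsto (fun y : ℝ => Real.arctan y / 2 + y / (2 * (1 + y ^ 2))) atBot
        (𝓝 (-(π / 2) / 2 + 0)) :=
      ((Real.tendsto_arctan_atBot.mono_right nhdsWithin_le_nhds).div_const 2).add haux'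
    have := integral_of_hasDerivAt_of_tendsto hF (integrable1 0 1 one_pos) hbot htop
    rw [this]
    ring
  · set s : ℝ := a ^ 2 + b ^ 2 - 1 with hs
    set D : ℝ := s ^ 2 + 4 * a ^ 2 with hD
    have hDpos : 0 < D := by
      rcases eq_or_ne a 0 with ha | ha
      · have hb1 : b ≠ 1 := fun h => hspec ⟨ha, h⟩
        have hsne : s ≠ 0 := by
          intro h
          rw [hs, ha] at h
          have h4 : (b - 1) * (b + 1) = 0 := by nlinarith
          rcases mul_eq_zero.mp h4 with h5 | h5
          · exact hb1 (by linarith)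
          · linarith
        rw [hD]
        positivity
      · rw [hD]
        positivity
    have hDne : D ≠ 0 := ne_of_gt hDpos
    have := key_integral a b (-(a * b) / D) ((2 * a ^ 2 - s) / D) (b * s / D) hb
      (fun y₁ : ℝ => (1 / ((a - y₁) ^ 2 + b ^ 2)) * b / (1 + y₁ ^ 2))
      (integrable1 a b hb) ?_
    · rw [this]
      rw [div_add_div _ _ hDne hDne]
      field_simp
      rw [hD, hs]
      ring
    · intro y
      have h1 : (0:ℝ) < (y - a) ^ 2 + b ^ 2 := by positivity
      have h2 : (0:ℝ) < 1 + y ^ 2 := by positivity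
      have h3 : (1:ℝ) + ((y - a) / b) ^ 2 > 0 := by positivity
      have hbne : b ≠ 0 := ne_of_gt hb
      show _ = 1 / ((a - y) ^ 2 + b ^ 2) * b / (1 + y ^ 2)
      field_simp
      rw [hD, hs]
      ring

private lemma key2 (a b : ℝ) (hb : 0 < b) :
    ∫ y₁ : ℝ, (1 / ((a - y₁) ^ 2 + b ^ 2)) * (y₁ - a) / (1 + y₁ ^ 2)
      = π * (-a / (a ^ 2 + (1 + b) ^ 2)) := by
  have hab : (0:ℝ) < a ^ 2 + (1 + b) ^ 2 := by positivity
  by_cases hspec : a = 0 ∧ b = 1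
  · obtain ⟨ha, hb1⟩ := hspec
    subst ha hb1
    have hF : ∀ y : ℝ, HasDerivAt (fun y : ℝ => -(2 * (1 + y ^ 2))⁻¹)
        ((1 / ((0 - y) ^ 2 + 1 ^ 2)) * (y - 0) / (1 + y ^ 2)) y := by
      intro y
      have h2 : (0:ℝ) < 1 + y ^ 2 := by positivity
      have hQ : HasDerivAt (fun y : ℝ => 2 * (1 + y ^ 2)) (2 * (2 * y)) y := by
        have := ((hasDerivAt_pow 2 y).const_add 1).const_mul 2
        simpa using this
      have h := (hQ.inv (by positivity)).neg
      refine h.congr_deriv ?_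
      field_simp
      ring
    have haux : Tendsto (fun y : ℝ => -(2 * (1 + y ^ 2))⁻¹) atTop (𝓝 0) := by
      apply (aux_tendsto_top 0 (-1/2)).congr
      intro y
      have h2 : (0:ℝ) < 1 + y ^ 2 := by positivity
      field_simp
      ring
    have haux' : Tendsto (fun y : ℝ => -(2 * (1 + y ^ 2))⁻¹) atBot (𝓝 0) := by
      apply (aux_tendsto_bot 0 (-1/2)).congr
      intro y
      have h2 : (0:ℝ) < 1 + y ^ 2 := by positivity
      field_simp
      ring
    have := integral_of_hasDerivAt_of_tendsto hF (integrable2 0 1 one_pos) haux' haux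
    rw [this]
    norm_num
  · set s : ℝ := a ^ 2 + b ^ 2 - 1 with hs
    set D : ℝ := s ^ 2 + 4 * a ^ 2 with hD
    have hDpos : 0 < D := by
      rcases eq_or_ne a 0 with ha | ha
      · have hb1 : b ≠ 1 := fun h => hspec ⟨ha, h⟩
        have hsne : s ≠ 0 := by
          intro h
          rw [hs, ha] at h
          have h4 : (b - 1) * (b + 1) = 0 := by nlinarith
          rcases mul_eq_zero.mp h4 with h5 | h5
          · exact hb1 (by linarith)
          · linarith
        rw [hD]
        positivity
      · rw [hD]
        positivity
    have hDne : D ≠ 0 := ne_of_gt hDpos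
    have := key_integral a b ((2 * a ^ 2 - s) / (2 * D)) (2 * a * b / D) (-(a * (s + 2)) / D) hb
      (fun y₁ : ℝ => (1 / ((a - y₁) ^ 2 + b ^ 2)) * (y₁ - a) / (1 + y₁ ^ 2))
      (integrable2 a b hb) ?_
    · rw [this]
      rw [div_add_div _ _ hDne hDne]
      field_simp
      rw [hD, hs]
      ring
    · intro y
      have h1 : (0:ℝ) < (y - a) ^ 2 + b ^ 2 := by positivity
      have h2 : (0:ℝ) < 1 + y ^ 2 := by positivity
      have h3 : (1:ℝ) + ((y - a) / b) ^ 2 > 0 := by positivity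
      have hbne : b ≠ 0 := ne_of_gt hb
      show _ = 1 / ((a - y) ^ 2 + b ^ 2) * (y - a) / (1 + y ^ 2)
      field_simp
      rw [hD, hs]
      ring

/-- Componentwise identity for the vector-valued integral
`(1/(2π²))·∫_ℝ [1/((x₁−y₁)² + x₂²)]·(x₂, y₁−x₁)/(1+y₁²) dy₁
  = (1/(2π))·(1+x₂, −x₁)/(x₁² + (1+x₂)²)`. -/
theorem boundary_layer_velocity_identity (x₁ x₂ : ℝ) (hx₂ : 0 < x₂) :
    ((1 / (2 * Real.pi^2)) * ∫ y₁ : ℝ, (1 / ((x₁ - y₁)^2 + x₂^2)) * x₂ / (1 + y₁^2)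
        = (1 / (2 * Real.pi)) * ((1 + x₂) / (x₁^2 + (1 + x₂)^2)))
    ∧ ((1 / (2 * Real.pi^2)) * ∫ y₁ : ℝ, (1 / ((x₁ - y₁)^2 + x₂^2)) * (y₁ - x₁) / (1 + y₁^2)
        = (1 / (2 * Real.pi)) * (-x₁ / (x₁^2 + (1 + x₂)^2))) := by
  have hab : (0:ℝ) < x₁ ^ 2 + (1 + x₂) ^ 2 := by positivity
  have hpi : Real.pi ≠ 0 := Real.pi_ne_zero
  constructor
  · rw [key1 x₁ x₂ hx₂]
    field_simp
  · rw [key2 x₁ x₂ hx₂]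
    field_simp
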